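/- (Abstract Lemma: b(t;φ) = C 𝓣(t) Kφ.) Let X be a Banach space, 𝓣₀ a C₀-semigroup with 𝓣₀(t) = 0 for t ≥ 1, C ∈ L(X), 𝓛₀(t) = C 𝓣₀(t), 𝓛 the solution of 𝓛(t) = 𝓛₀(t) + ∫_0^t 𝓛(a)𝓛₀(t−a) da, and 𝓣(t) = 𝓣₀(t) + ∫_0^t 𝓣₀(t−s)𝓛(s) ds. For φ ∈ L¹([−1,0];X) define f(t) = ∫_t^1 𝓛₀(a)φ(t−a) da (zero for t ≥ 1) and b(t;φ) = f(t) + ∫_0^t 𝓛(a) f(t−a) da. Then f(t) = 𝓛₀(t)(Kφ) where Kφ = ∫_0^1 𝓣₀(a)φ(−a) da, and consequently b(t;φ) = 𝓛(t)(Kφ) = C 𝓣(t)(Kφ) for t > 0. -/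

import Mathlib

open Set intervalIntegral MeasureTheory
open Filter Topology

section AuxiliaryLemmas

variable {X : Type*} [NormedAddCommGroup X] [NormedSpace ℝ X] [CompleteSpace X]

noncomputable def clmp (T a : ℝ) : ℝ := max 0 (min a T)

lemma clmp_cont (T : ℝ) : Continuous (clmp T) :=
  continuous_const.max (continuous_id.min continuous_const)

lemma clmp_mem (T : ℝ) (hT : 0 ≤ T) (a : ℝ) : clmp T a ∈ Icc 0 T := by
  constructor
  · exact le_max_left _ _
  · exact max_le (by exact hT) (min_le_right _ _)

lemma clmp_eq (T : ℝ) {a : ℝ} (h : a ∈ Icc 0 T) : clmp T a = a := by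
  rcases h with ⟨h1, h2⟩
  unfold clmp
  rw [min_eq_left h2, max_eq_right h1]

lemma bs_bound (A : ℝ → X →L[ℝ] X) (hA : ∀ x : X, ContinuousOn (fun t => A t x) (Ici 0))
    (T : ℝ) : ∃ M : ℝ, 0 ≤ M ∧ ∀ s ∈ Icc (0:ℝ) T, ‖A s‖ ≤ M := by
  have hsub : Icc (0:ℝ) T ⊆ Ici 0 := fun s hs => hs.1
  have hpt : ∀ x : X, ∃ Cx : ℝ, ∀ i : Icc (0:ℝ) T, ‖A i x‖ ≤ Cx := by
    intro x
    obtain ⟨Cx, hCx⟩ := isCompact_Icc.exists_bound_of_continuousOn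
      ((hA x).mono hsub)
    exact ⟨Cx, fun i => hCx i i.2⟩
  obtain ⟨M, hM⟩ := banach_steinhaus (g := fun i : Icc (0:ℝ) T => A i) hpt
  refine ⟨max M 0, le_max_right _ _, fun s hs => ?_⟩
  exact le_trans (hM ⟨s, hs⟩) (le_max_left _ _)

lemma clmp_joint (A : ℝ → X →L[ℝ] X) (hA : ∀ x : X, ContinuousOn (fun t => A t x) (Ici 0))
    (T : ℝ) (hT : 0 ≤ T) : Continuous (fun p : ℝ × X => A (clmp T p.1) p.2) := by
  obtain ⟨M, hM0, hM⟩ := bs_bound A hA T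
  rw [continuous_iff_continuousAt]
  rintro ⟨a₀, y₀⟩
  have h1 : Tendsto (fun p : ℝ × X => A (clmp T p.1) (p.2 - y₀)) (nhds (a₀, y₀)) (nhds 0) := by
    apply squeeze_zero_norm (a := fun p : ℝ × X => M * ‖p.2 - y₀‖)
    · intro p
      calc ‖A (clmp T p.1) (p.2 - y₀)‖ ≤ ‖A (clmp T p.1)‖ * ‖p.2 - y₀‖ :=
            (A (clmp T p.1)).le_opNorm _
        _ ≤ M * ‖p.2 - y₀‖ := by
            apply mul_le_mul_of_nonneg_right (hM _ (clmp_mem T hT _)) (norm_nonneg _)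
    · have : Continuous (fun p : ℝ × X => M * ‖p.2 - y₀‖) := by continuity
      have h0 : (fun p : ℝ × X => M * ‖p.2 - y₀‖) (a₀, y₀) = 0 := by simp
      simpa [h0] using this.tendsto (a₀, y₀)
  have h2 : Tendsto (fun p : ℝ × X => A (clmp T p.1) y₀) (nhds (a₀, y₀))
      (nhds (A (clmp T a₀) y₀)) := by
    have hc : Continuous fun a : ℝ => A (clmp T a) y₀ := by
      exact (hA y₀).comp_continuous (clmp_cont T) (fun a => (clmp_mem T hT a).1)
    exact (hc.comp continuous_fst).tendsto (a₀, y₀)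
  have key := h1.add h2
  simp only [zero_add] at key
  have heq : (fun p : ℝ × X => A (clmp T p.1) (p.2 - y₀) + A (clmp T p.1) y₀)
      = fun p : ℝ × X => A (clmp T p.1) p.2 := by
    funext p; rw [← ContinuousLinearMap.map_add, sub_add_cancel]
  rw [heq] at key
  exact key

lemma strong_comp_contOn (A : ℝ → X →L[ℝ] X)
    (hA : ∀ x : X, ContinuousOn (fun t => A t x) (Ici 0))
    (Tm : ℝ) (hTm : 0 ≤ Tm) {θ : ℝ → ℝ} {g : ℝ → X} {S : Set ℝ}
    (hθ : ContinuousOn θ S) (hθr : ∀ s ∈ S, θ s ∈ Icc 0 Tm)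
    (hg : ContinuousOn g S) :
    ContinuousOn (fun s => A (θ s) (g s)) S := by
  have hj := clmp_joint A hA Tm hTm
  have h1 : ContinuousOn (fun s => A (clmp Tm (θ s)) (g s)) S :=
    hj.comp_continuousOn (hθ.prodMk hg)
  apply h1.congr
  intro s hs
  show A (θ s) (g s) = A (clmp Tm (θ s)) (g s)
  rw [clmp_eq Tm (hθr s hs)]

lemma strong_comp_intervalIntegrable (A : ℝ → X →L[ℝ] X)
    (hA : ∀ x : X, ContinuousOn (fun t => A t x) (Ici 0))
    (Tm : ℝ) (hTm : 0 ≤ Tm) {θ : ℝ → ℝ} {ψ : ℝ → X} {u v : ℝ}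
    (hθ : Measurable θ) (hθr : ∀ a ∈ uIcc u v, θ a ∈ Icc 0 Tm)
    (hψ : IntervalIntegrable ψ volume u v) :
    IntervalIntegrable (fun a => A (θ a) (ψ a)) volume u v := by
  obtain ⟨M, hM0, hM⟩ := bs_bound A hA Tm
  have hj := clmp_joint A hA Tm hTm
  rw [intervalIntegrable_iff] at hψ ⊢
  have hmeas : AEStronglyMeasurable (fun a => A (clmp Tm (θ a)) (ψ a))
      (volume.restrict (uIoc u v)) := by
    exact hj.comp_aestronglyMeasurable
      (AEStronglyMeasurable.prodMk hθ.aestronglyMeasurable hψ.aestronglyMeasurable)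
  have hmeas' : AEStronglyMeasurable (fun a => A (θ a) (ψ a)) (volume.restrict (uIoc u v)) := by
    apply hmeas.congr
    filter_upwards [ae_restrict_mem measurableSet_uIoc] with a ha
    show A (clmp Tm (θ a)) (ψ a) = A (θ a) (ψ a)
    rw [clmp_eq Tm (hθr a (uIoc_subset_uIcc ha))]
  apply Integrable.mono' (hψ.norm.const_mul M) hmeas'
  filter_upwards [ae_restrict_mem measurableSet_uIoc] with a ha
  calc ‖A (θ a) (ψ a)‖ ≤ ‖A (θ a)‖ * ‖ψ a‖ := (A (θ a)).le_opNorm _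
    _ ≤ M * ‖ψ a‖ := mul_le_mul_of_nonneg_right (hM _ (hθr a (uIoc_subset_uIcc ha))) (norm_nonneg _)

lemma triangle_swap {g : ℝ × ℝ → X} (hg : Continuous g) {t : ℝ} (ht : (0:ℝ) ≤ t) :
    (∫ s in (0:ℝ)..t, ∫ u in (0:ℝ)..s, g (u, s)) = ∫ u in (0:ℝ)..t, ∫ s in u..t, g (u, s) := by
  set G : ℝ × ℝ → X := ({p : ℝ × ℝ | p.1 ≤ p.2}).indicator g with hGdef
  have hsetm : MeasurableSet {p : ℝ × ℝ | p.1 ≤ p.2} := measurableSet_le measurable_fst measurable_snd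
  have hGsm : StronglyMeasurable G := hg.stronglyMeasurable.indicator hsetm
  obtain ⟨B, hB⟩ := (isCompact_Icc.prod isCompact_Icc).exists_bound_of_continuousOn
    (hg.continuousOn (s := Icc (0:ℝ) t ×ˢ Icc (0:ℝ) t))
  have hGrow : ∀ s a b : ℝ, IntervalIntegrable (fun u => G (u, s)) volume a b := by
    intro s a b
    have hcont : Continuous fun u : ℝ => g (u, s) :=
      hg.comp (continuous_id.prodMk continuous_const)
    have heq : (fun u : ℝ => G (u, s)) = (Iic s).indicator fun u => g (u, s) := by
      funext u
      by_cases h : u ≤ s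
      · rw [hGdef]
        rw [indicator_of_mem (by simpa using h), indicator_of_mem (by simpa using h)]
      · rw [hGdef]
        rw [indicator_of_notMem (by simpa using h), indicator_of_notMem (by simpa using h)]
    rw [heq, intervalIntegrable_iff]
    exact ((hcont.intervalIntegrable a b).def').indicator measurableSet_Iic
  have hGcol : ∀ u a b : ℝ, IntervalIntegrable (fun s => G (u, s)) volume a b := by
    intro u a b
    have hcont : Continuous fun s : ℝ => g (u, s) :=
      hg.comp (continuous_const.prodMk continuous_id)
    have heq : (fun s : ℝ => G (u, s)) = (Ici u).indicator fun s => g (u, s) := by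
      funext s
      by_cases h : u ≤ s
      · rw [hGdef]
        rw [indicator_of_mem (by simpa using h), indicator_of_mem (by simpa using h)]
      · rw [hGdef]
        rw [indicator_of_notMem (by simpa using h), indicator_of_notMem (by simpa using h)]
    rw [heq, intervalIntegrable_iff]
    exact ((hcont.intervalIntegrable a b).def').indicator measurableSet_Ici
  have step1 : (∫ s in (0:ℝ)..t, ∫ u in (0:ℝ)..s, g (u, s))
      = ∫ s in (0:ℝ)..t, ∫ u in (0:ℝ)..t, G (u, s) := by
    apply integral_congr
    intro s hs
    rw [uIcc_of_le ht] at hs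
    have h1 : (∫ u in (0:ℝ)..s, G (u, s)) = ∫ u in (0:ℝ)..s, g (u, s) := by
      apply integral_congr
      intro u hu
      rw [uIcc_of_le hs.1] at hu
      exact indicator_of_mem (by simpa using hu.2) g
    have h2 : (∫ u in s..t, G (u, s)) = 0 := by
      rw [integral_of_le hs.2]
      apply integral_eq_zero_of_ae
      filter_upwards [ae_restrict_mem measurableSet_Ioc] with u hu
      exact indicator_of_notMem (by simpa using not_le.mpr hu.1) g
    have hsplit := integral_add_adjacent_intervals (hGrow s 0 s) (hGrow s s t)
    rw [h1, h2, add_zero] at hsplit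
    show (∫ u in (0:ℝ)..s, g (u, s)) = ∫ u in (0:ℝ)..t, G (u, s)
    exact hsplit
  have step3 : (∫ u in (0:ℝ)..t, ∫ s in (0:ℝ)..t, G (u, s))
      = ∫ u in (0:ℝ)..t, ∫ s in u..t, g (u, s) := by
    apply integral_congr
    intro u hu
    rw [uIcc_of_le ht] at hu
    have h1 : (∫ s in (0:ℝ)..u, G (u, s)) = 0 := by
      rw [integral_of_le hu.1]
      apply integral_eq_zero_of_ae
      have hne : ∀ᵐ s ∂(volume.restrict (Ioc (0:ℝ) u)), s ≠ u := by
        apply ae_restrict_of_ae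
        rw [ae_iff]
        simp only [not_not]
        have hss : {s : ℝ | s = u} = {u} := by ext s; simp
        rw [hss]
        exact measure_singleton u
      filter_upwards [ae_restrict_mem measurableSet_Ioc, hne] with s hs hsne
      refine indicator_of_notMem ?_ g
      simp only [mem_setOf_eq, not_le]
      exact lt_of_le_of_ne hs.2 hsne
    have h2 : (∫ s in u..t, G (u, s)) = ∫ s in u..t, g (u, s) := by
      apply integral_congr
      intro s hs
      rw [uIcc_of_le hu.2] at hs
      exact indicator_of_mem (by simpa using hs.1) g
    have hsplit := integral_add_adjacent_intervals (hGcol u 0 u) (hGcol u u t)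
    rw [h1, h2, zero_add] at hsplit
    show (∫ s in (0:ℝ)..t, G (u, s)) = ∫ s in u..t, g (u, s)
    exact hsplit.symm
  have step2 : (∫ s in (0:ℝ)..t, ∫ u in (0:ℝ)..t, G (u, s))
      = ∫ u in (0:ℝ)..t, ∫ s in (0:ℝ)..t, G (u, s) := by
    simp only [integral_of_le ht]
    haveI : IsFiniteMeasure (volume.restrict (Ioc (0:ℝ) t)) :=
      ⟨by rw [Measure.restrict_apply_univ]; exact measure_Ioc_lt_top⟩
    apply MeasureTheory.integral_integral_swap (f := fun s u => G (u, s))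
    have hmeas : AEStronglyMeasurable (Function.uncurry fun s u => G (u, s))
        ((volume.restrict (Ioc (0:ℝ) t)).prod (volume.restrict (Ioc (0:ℝ) t))) :=
      (hGsm.comp_measurable measurable_swap).aestronglyMeasurable
    apply Integrable.mono' (integrable_const (max B 0)) hmeas
    rw [Measure.prod_restrict]
    filter_upwards [ae_restrict_mem (measurableSet_Ioc.prod measurableSet_Ioc)] with p hp
    calc ‖Function.uncurry (fun s u => G (u, s)) p‖ ≤ ‖g (p.2, p.1)‖ :=
          norm_indicator_le_norm_self _ _
      _ ≤ B := hB _ ⟨Ioc_subset_Icc_self hp.2, Ioc_subset_Icc_self hp.1⟩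
      _ ≤ max B 0 := le_max_left _ _
  rw [step1, step2, step3]

theorem conv_comm (T0 : ℝ → X →L[ℝ] X)
    (hT0cont : ∀ x : X, ContinuousOn (fun t => T0 t x) (Ici 0))
    (C : X →L[ℝ] X)
    (L : ℝ → X →L[ℝ] X)
    (hLcont : ∀ x : X, ContinuousOn (fun t => L t x) (Ici 0))
    (hL : ∀ t : ℝ, 0 ≤ t → ∀ x : X,
      L t x = C (T0 t x) + ∫ a in (0:ℝ)..t, L a (C (T0 (t - a) x)))
    {t : ℝ} (ht : 0 ≤ t) (x : X) :
    (∫ s in (0:ℝ)..t, C (T0 (t - s) (L s x))) = ∫ a in (0:ℝ)..t, L a (C (T0 (t - a) x)) := by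
  classical
  -- the "L0" operator family
  set A0 : ℝ → X →L[ℝ] X := fun r => C.comp (T0 r) with hA0def
  have hA0 : ∀ y : X, ContinuousOn (fun r => A0 r y) (Ici 0) := fun y =>
    C.continuous.comp_continuousOn (hT0cont y)
  obtain ⟨MT, hMT0, hMT⟩ := bs_bound T0 hT0cont t
  obtain ⟨ML, hML0, hML⟩ := bs_bound L hLcont t
  set K : ℝ := ‖C‖ * MT with hKdef
  have hK0 : 0 ≤ K := mul_nonneg (norm_nonneg _) hMT0
  set M0 : ℝ := ML + K + K * ML * t with hM0def
  have hM00 : 0 ≤ M0 := by positivity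
  set E : ℝ → X → X := fun r y =>
    L r y - C (T0 r y) - ∫ a in (0:ℝ)..r, C (T0 (r - a) (L a y)) with hEdef
  -- basic bound on C (T0 r y)
  have hCT0 : ∀ r ∈ Icc (0:ℝ) t, ∀ y : X, ‖C (T0 r y)‖ ≤ K * ‖y‖ := by
    intro r hr y
    calc ‖C (T0 r y)‖ ≤ ‖C‖ * ‖T0 r y‖ := C.le_opNorm _
      _ ≤ ‖C‖ * (‖T0 r‖ * ‖y‖) := by
          exact mul_le_mul_of_nonneg_left ((T0 r).le_opNorm y) (norm_nonneg _)
      _ ≤ ‖C‖ * (MT * ‖y‖) := by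
          have := mul_le_mul_of_nonneg_right (hMT r hr) (norm_nonneg y)
          exact mul_le_mul_of_nonneg_left this (norm_nonneg _)
      _ = K * ‖y‖ := by rw [hKdef]; ring
  have hLnorm : ∀ r ∈ Icc (0:ℝ) t, ∀ y : X, ‖L r y‖ ≤ ML * ‖y‖ := by
    intro r hr y
    calc ‖L r y‖ ≤ ‖L r‖ * ‖y‖ := (L r).le_opNorm _
      _ ≤ ML * ‖y‖ := mul_le_mul_of_nonneg_right (hML r hr) (norm_nonneg _)
  -- continuity helpers
  have hcont1 : ∀ r ∈ Icc (0:ℝ) t, ∀ y : X,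
      ContinuousOn (fun s => L s (C (T0 (r - s) y))) (Icc 0 r) := by
    intro r hr y
    have hg : ContinuousOn (fun s => A0 (r - s) y) (Icc (0:ℝ) r) := by
      apply strong_comp_contOn A0 hA0 t ht (θ := fun s => r - s) (g := fun _ => y)
      · exact (continuous_const.sub continuous_id).continuousOn
      · intro s hs; exact ⟨by linarith [hs.2], by linarith [hs.1, hr.2]⟩
      · exact continuousOn_const
    apply strong_comp_contOn L hLcont t ht (θ := fun s => s) continuousOn_id
      (fun s hs => ⟨hs.1, hs.2.trans hr.2⟩) hg
  have hcont2 : ∀ r ∈ Icc (0:ℝ) t, ∀ y : X,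
      ContinuousOn (fun s => C (T0 s (C (T0 (r - s) y)))) (Icc 0 r) := by
    intro r hr y
    have hg : ContinuousOn (fun s => A0 (r - s) y) (Icc (0:ℝ) r) := by
      apply strong_comp_contOn A0 hA0 t ht (θ := fun s => r - s) (g := fun _ => y)
      · exact (continuous_const.sub continuous_id).continuousOn
      · intro s hs; exact ⟨by linarith [hs.2], by linarith [hs.1, hr.2]⟩
      · exact continuousOn_const
    exact strong_comp_contOn A0 hA0 t ht (θ := fun s => s) continuousOn_id
      (fun s hs => ⟨hs.1, hs.2.trans hr.2⟩) hg
  -- bound for E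
  have normE : ∀ r ∈ Icc (0:ℝ) t, ∀ y : X, ‖E r y‖ ≤ M0 * ‖y‖ := by
    intro r hr y
    have hint : ‖∫ a in (0:ℝ)..r, C (T0 (r - a) (L a y))‖ ≤ (K * (ML * ‖y‖)) * |r - 0| := by
      apply intervalIntegral.norm_integral_le_of_norm_le_const
      intro a ha
      rw [uIoc_of_le hr.1] at ha
      have ha' : a ∈ Icc (0:ℝ) t := ⟨ha.1.le, ha.2.trans hr.2⟩
      have hra : r - a ∈ Icc (0:ℝ) t := ⟨by linarith [ha.2], by linarith [ha.1, hr.2]⟩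
      calc ‖C (T0 (r - a) (L a y))‖ ≤ K * ‖L a y‖ := hCT0 _ hra _
        _ ≤ K * (ML * ‖y‖) := mul_le_mul_of_nonneg_left (hLnorm _ ha' _) hK0
    have hr0 : |r - 0| ≤ t := by rw [sub_zero, abs_of_nonneg hr.1]; exact hr.2
    have : ‖E r y‖ ≤ ‖L r y‖ + ‖C (T0 r y)‖ + ‖∫ a in (0:ℝ)..r, C (T0 (r - a) (L a y))‖ := by
      rw [hEdef]
      exact (norm_sub_le _ _).trans (by gcongr; exact norm_sub_le _ _)
    refine this.trans ?_
    have h3 : ‖∫ a in (0:ℝ)..r, C (T0 (r - a) (L a y))‖ ≤ K * ML * t * ‖y‖ := by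
      refine hint.trans ?_
      calc (K * (ML * ‖y‖)) * |r - 0| ≤ (K * (ML * ‖y‖)) * t := by
            apply mul_le_mul_of_nonneg_left hr0 (by positivity)
        _ = K * ML * t * ‖y‖ := by ring
    have h1 := hLnorm r hr y
    have h2 := hCT0 r hr y
    rw [hM0def]; nlinarith [norm_nonneg y]
  -- the recursion identity
  have hrec : ∀ r ∈ Icc (0:ℝ) t, ∀ y : X,
      E r y = ∫ s in (0:ℝ)..r, E s (C (T0 (r - s) y)) := by
    intro r hr y
    have hr0 := hr.1
    have hrt := hr.2
    have F0 := clmp_joint A0 hA0 t ht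
    have FL := clmp_joint L hLcont t ht
    set g1 : ℝ × ℝ → X := fun p =>
      A0 (clmp t (r - p.2)) (L (clmp t p.1) (A0 (clmp t (p.2 - p.1)) y)) with hg1def
    set g2 : ℝ × ℝ → X := fun p =>
      A0 (clmp t (p.2 - p.1)) (L (clmp t p.1) (A0 (clmp t (r - p.2)) y)) with hg2def
    have hg1 : Continuous g1 := by
      have c1 : Continuous fun p : ℝ × ℝ => A0 (clmp t (p.2 - p.1)) y :=
        F0.comp ((continuous_snd.sub continuous_fst).prodMk continuous_const)
      have c2 : Continuous fun p : ℝ × ℝ => L (clmp t p.1) (A0 (clmp t (p.2 - p.1)) y) :=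
        FL.comp (continuous_fst.prodMk c1)
      exact F0.comp ((continuous_const.sub continuous_snd).prodMk c2)
    have hg2 : Continuous g2 := by
      have c1 : Continuous fun p : ℝ × ℝ => A0 (clmp t (r - p.2)) y :=
        F0.comp ((continuous_const.sub continuous_snd).prodMk continuous_const)
      have c2 : Continuous fun p : ℝ × ℝ => L (clmp t p.1) (A0 (clmp t (r - p.2)) y) :=
        FL.comp (continuous_fst.prodMk c1)
      exact F0.comp ((continuous_snd.sub continuous_fst).prodMk c2)
    have hIcont : Continuous fun s : ℝ => ∫ u in (0:ℝ)..s, g2 (u, s) := by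
      have hunc : Continuous (Function.uncurry fun s u : ℝ => g2 (u, s)) :=
        hg2.comp continuous_swap
      exact continuous_parametric_intervalIntegral_of_continuous hunc continuous_id
    have hJcont : Continuous fun a : ℝ => ∫ u in (0:ℝ)..a, g1 (u, a) := by
      have hunc : Continuous (Function.uncurry fun a u : ℝ => g1 (u, a)) :=
        hg1.comp continuous_swap
      exact continuous_parametric_intervalIntegral_of_continuous hunc continuous_id
    have hIeq : ∀ s ∈ Icc (0:ℝ) r,
        (∫ u in (0:ℝ)..s, C (T0 (s - u) (L u (C (T0 (r - s) y)))))
          = ∫ u in (0:ℝ)..s, g2 (u, s) := by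
      intro s hs
      apply integral_congr
      intro u hu
      rw [uIcc_of_le hs.1] at hu
      have e1 : clmp t u = u := clmp_eq t ⟨hu.1, hu.2.trans (hs.2.trans hrt)⟩
      have e2 : clmp t (s - u) = s - u :=
        clmp_eq t ⟨by linarith [hu.2], by linarith [hu.1, hs.2, hrt]⟩
      have e3 : clmp t (r - s) = r - s :=
        clmp_eq t ⟨by linarith [hs.2], by linarith [hs.1, hrt]⟩
      show C (T0 (s - u) (L u (C (T0 (r - s) y))))
        = A0 (clmp t (s - u)) (L (clmp t u) (A0 (clmp t (r - s)) y))
      rw [e1, e2, e3]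
      rfl
    have hJeq : ∀ a ∈ Icc (0:ℝ) r,
        (∫ u in (0:ℝ)..a, C (T0 (r - a) (L u (C (T0 (a - u) y)))))
          = ∫ u in (0:ℝ)..a, g1 (u, a) := by
      intro a ha
      apply integral_congr
      intro u hu
      rw [uIcc_of_le ha.1] at hu
      have e1 : clmp t u = u := clmp_eq t ⟨hu.1, hu.2.trans (ha.2.trans hrt)⟩
      have e2 : clmp t (a - u) = a - u :=
        clmp_eq t ⟨by linarith [hu.2], by linarith [hu.1, ha.2, hrt]⟩
      have e3 : clmp t (r - a) = r - a :=
        clmp_eq t ⟨by linarith [ha.2], by linarith [ha.1, hrt]⟩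
      show C (T0 (r - a) (L u (C (T0 (a - u) y))))
        = A0 (clmp t (r - a)) (L (clmp t u) (A0 (clmp t (a - u)) y))
      rw [e1, e2, e3]
      rfl
    have int1 : IntervalIntegrable (fun s => L s (C (T0 (r - s) y))) volume 0 r := by
      apply ContinuousOn.intervalIntegrable
      rw [uIcc_of_le hr0]
      exact hcont1 r hr y
    have int2 : IntervalIntegrable (fun s => C (T0 s (C (T0 (r - s) y)))) volume 0 r := by
      apply ContinuousOn.intervalIntegrable
      rw [uIcc_of_le hr0]
      exact hcont2 r hr y
    have int3 : IntervalIntegrable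
        (fun s => ∫ u in (0:ℝ)..s, C (T0 (s - u) (L u (C (T0 (r - s) y))))) volume 0 r := by
      apply ContinuousOn.intervalIntegrable
      rw [uIcc_of_le hr0]
      exact hIcont.continuousOn.congr hIeq
    have hsplit : (∫ s in (0:ℝ)..r, E s (C (T0 (r - s) y))) =
        (∫ s in (0:ℝ)..r, L s (C (T0 (r - s) y)))
          - (∫ s in (0:ℝ)..r, C (T0 s (C (T0 (r - s) y))))
          - ∫ s in (0:ℝ)..r, ∫ u in (0:ℝ)..s, C (T0 (s - u) (L u (C (T0 (r - s) y)))) := by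
      rw [← integral_sub int1 int2, ← integral_sub (int1.sub int2) int3]
    have hint1 : (∫ s in (0:ℝ)..r, L s (C (T0 (r - s) y))) = L r y - C (T0 r y) := by
      have h := hL r hr0 y
      rw [h]
      abel
    -- expansion of Q
    have intQ1 : IntervalIntegrable (fun a => C (T0 (r - a) (C (T0 a y)))) volume 0 r := by
      apply ContinuousOn.intervalIntegrable
      rw [uIcc_of_le hr0]
      have hginner : ContinuousOn (fun a => A0 a y) (Icc (0:ℝ) r) :=
        strong_comp_contOn A0 hA0 t ht continuousOn_id
          (fun a ha => ⟨ha.1, ha.2.trans hrt⟩) continuousOn_const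
      apply strong_comp_contOn A0 hA0 t ht (θ := fun a => r - a)
        (continuous_const.sub continuous_id).continuousOn ?_ hginner
      intro a ha
      have h1 := ha.1
      have h2 := ha.2
      refine ⟨?_, ?_⟩
      · show (0:ℝ) ≤ r - a
        linarith
      · show r - a ≤ t
        linarith
    have intQ2 : IntervalIntegrable
        (fun a => ∫ u in (0:ℝ)..a, C (T0 (r - a) (L u (C (T0 (a - u) y))))) volume 0 r := by
      apply ContinuousOn.intervalIntegrable
      rw [uIcc_of_le hr0]
      exact hJcont.continuousOn.congr hJeq
    have hQ1 : ∀ a ∈ uIcc (0:ℝ) r, C (T0 (r - a) (L a y)) =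
        C (T0 (r - a) (C (T0 a y)))
          + ∫ u in (0:ℝ)..a, C (T0 (r - a) (L u (C (T0 (a - u) y)))) := by
      intro a ha
      rw [uIcc_of_le hr0] at ha
      have ha' : a ∈ Icc (0:ℝ) t := ⟨ha.1, ha.2.trans hrt⟩
      have hii : IntervalIntegrable (fun u => L u (C (T0 (a - u) y))) volume 0 a := by
        apply ContinuousOn.intervalIntegrable
        rw [uIcc_of_le ha.1]
        exact hcont1 a ha' y
      have h := hL a ha.1 y
      show A0 (r - a) (L a y) = A0 (r - a) (C (T0 a y))
        + ∫ u in (0:ℝ)..a, A0 (r - a) (L u (C (T0 (a - u) y)))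
      rw [h, map_add, (A0 (r - a)).intervalIntegral_comp_comm hii]
    have hQ : (∫ a in (0:ℝ)..r, C (T0 (r - a) (L a y))) =
        (∫ a in (0:ℝ)..r, C (T0 (r - a) (C (T0 a y))))
          + ∫ a in (0:ℝ)..r, ∫ u in (0:ℝ)..a, C (T0 (r - a) (L u (C (T0 (a - u) y)))) := by
      rw [← integral_add intQ1 intQ2]
      exact integral_congr hQ1
    have hfirst : (∫ a in (0:ℝ)..r, C (T0 (r - a) (C (T0 a y))))
        = ∫ s in (0:ℝ)..r, C (T0 s (C (T0 (r - s) y))) := by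
      have h1 : ∀ a ∈ uIcc (0:ℝ) r, C (T0 (r - a) (C (T0 a y)))
          = (fun s => C (T0 s (C (T0 (r - s) y)))) (r - a) := by
        intro a _
        simp only [sub_sub_cancel]
      rw [integral_congr h1, integral_comp_sub_left (fun s => C (T0 s (C (T0 (r - s) y)))) r]
      norm_num
    have hsecond : (∫ a in (0:ℝ)..r, ∫ u in (0:ℝ)..a, C (T0 (r - a) (L u (C (T0 (a - u) y)))))
        = ∫ s in (0:ℝ)..r, ∫ u in (0:ℝ)..s, C (T0 (s - u) (L u (C (T0 (r - s) y)))) := by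
      have e1 : (∫ a in (0:ℝ)..r, ∫ u in (0:ℝ)..a, C (T0 (r - a) (L u (C (T0 (a - u) y)))))
          = ∫ a in (0:ℝ)..r, ∫ u in (0:ℝ)..a, g1 (u, a) := by
        apply integral_congr
        intro a ha
        rw [uIcc_of_le hr0] at ha
        exact hJeq a ha
      rw [e1, triangle_swap hg1 hr0]
      have e2 : ∀ u ∈ uIcc (0:ℝ) r, (∫ a in u..r, g1 (u, a)) = ∫ s in u..r, g2 (u, s) := by
        intro u hu
        rw [uIcc_of_le hr0] at hu
        have h3 : ∀ a ∈ uIcc u r, g1 (u, a) = (fun s => g2 (u, s)) (r + u - a) := by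
          intro a _
          show A0 (clmp t (r - a)) (L (clmp t u) (A0 (clmp t (a - u)) y))
            = A0 (clmp t (r + u - a - u)) (L (clmp t u) (A0 (clmp t (r - (r + u - a))) y))
          have e4 : r + u - a - u = r - a := by ring
          have e5 : r - (r + u - a) = a - u := by ring
          rw [e4, e5]
        rw [integral_congr h3, integral_comp_sub_left (fun s => g2 (u, s)) (r + u)]
        have e6 : r + u - r = u := by ring
        have e7 : r + u - u = r := by ring
        rw [e6, e7]
      rw [integral_congr e2, ← triangle_swap hg2 hr0]
      apply (integral_congr ?_).symm
      intro s hs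
      rw [uIcc_of_le hr0] at hs
      exact hIeq s hs
    show L r y - C (T0 r y) - (∫ a in (0:ℝ)..r, C (T0 (r - a) (L a y)))
      = ∫ s in (0:ℝ)..r, E s (C (T0 (r - s) y))
    rw [hsplit, hint1, hQ, hfirst, hsecond]
    abel
  -- iterated bound
  have hbound : ∀ n : ℕ, ∀ r ∈ Icc (0:ℝ) t, ∀ y : X,
      ‖E r y‖ ≤ M0 * ((K * r) ^ n / n.factorial) * ‖y‖ := by
    intro n
    induction n with
    | zero =>
      intro r hr y
      simpa using normE r hr y
    | succ n ih =>
      intro r hr y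
      have hr0 := hr.1
      have hrt := hr.2
      rw [hrec r hr y]
      have hglei : ∀ s ∈ uIoc (0:ℝ) r, ‖E s (C (T0 (r - s) y))‖
          ≤ M0 * ((K * s) ^ n / n.factorial) * (K * ‖y‖) := by
        intro s hs
        rw [uIoc_of_le hr0] at hs
        have hs' : s ∈ Icc (0:ℝ) t := ⟨hs.1.le, hs.2.trans hrt⟩
        have hrs : r - s ∈ Icc (0:ℝ) t := ⟨by linarith [hs.2], by linarith [hs.1.le, hrt]⟩
        calc ‖E s (C (T0 (r - s) y))‖
            ≤ M0 * ((K * s) ^ n / n.factorial) * ‖C (T0 (r - s) y)‖ := ih s hs' _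
          _ ≤ M0 * ((K * s) ^ n / n.factorial) * (K * ‖y‖) := by
              apply mul_le_mul_of_nonneg_left (hCT0 _ hrs y)
              have h1 : (0:ℝ) ≤ (K * s) ^ n := pow_nonneg (mul_nonneg hK0 hs.1.le) n
              positivity
      have hgint : IntervalIntegrable
          (fun s => M0 * ((K * s) ^ n / n.factorial) * (K * ‖y‖)) volume 0 r := by
        apply Continuous.intervalIntegrable
        exact (continuous_const.mul (((continuous_const.mul continuous_id).pow n).div_const
          _)).mul continuous_const
      have hle := (intervalIntegral.norm_integral_le_of_norm_le
        (f := fun s => E s (C (T0 (r - s) y)))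
        (g := fun s => M0 * ((K * s) ^ n / n.factorial) * (K * ‖y‖)) hr0
        (ae_of_all _ fun s hs => hglei s (by rw [uIoc_of_le hr0]; exact hs)) hgint).trans
        (le_abs_self _)
      refine hle.trans ?_
      have hval : (∫ s in (0:ℝ)..r, M0 * ((K * s) ^ n / n.factorial) * (K * ‖y‖))
          = M0 * ((K * r) ^ (n + 1) / (n + 1).factorial) * ‖y‖ := by
        have hfe : (fun s : ℝ => M0 * ((K * s) ^ n / n.factorial) * (K * ‖y‖))
            = fun s : ℝ => (M0 * K ^ n / n.factorial * (K * ‖y‖)) * s ^ n := by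
          funext s
          rw [mul_pow]
          ring
        rw [hfe, intervalIntegral.integral_const_mul, integral_pow]
        have hfact : ((n + 1).factorial : ℝ) = (n + 1) * n.factorial := by
          rw [Nat.factorial_succ]
          push_cast
          ring
        have hnfac : (n.factorial : ℝ) ≠ 0 := by
          exact_mod_cast Nat.factorial_ne_zero n
        rw [mul_pow, hfact]
        field_simp
        ring
      rw [hval]
      have : (0:ℝ) ≤ M0 * ((K * r) ^ (n + 1) / (n + 1).factorial) * ‖y‖ := by
        have : (0:ℝ) ≤ (K * r) ^ (n + 1) := pow_nonneg (mul_nonneg hK0 hr0) _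
        positivity
      rw [abs_of_nonneg this]
  -- conclusion
  have hE0 : E t x = 0 := by
    have hlim : Tendsto (fun n : ℕ => M0 * ((K * t) ^ n / n.factorial) * ‖x‖)
        atTop (nhds 0) := by
      have h := FloorSemiring.tendsto_pow_div_factorial_atTop (K * t)
      have := (h.const_mul M0).mul_const ‖x‖
      simpa using this
    have hle : ∀ n : ℕ, ‖E t x‖ ≤ M0 * ((K * t) ^ n / n.factorial) * ‖x‖ := fun n =>
      hbound n t ⟨ht, le_refl t⟩ x
    have : ‖E t x‖ ≤ 0 := ge_of_tendsto hlim (Eventually.of_forall hle)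
    have h0 : ‖E t x‖ = 0 := le_antisymm this (norm_nonneg _)
    exact norm_eq_zero.mp h0
  have hEexp : L t x - C (T0 t x) - (∫ a in (0:ℝ)..t, C (T0 (t - a) (L a x))) = 0 := hE0
  have hQeq : L t x - C (T0 t x) = ∫ a in (0:ℝ)..t, C (T0 (t - a) (L a x)) :=
    sub_eq_zero.mp hEexp
  have h := hL t ht x
  rw [← hQeq, h]
  abel

end AuxiliaryLemmas

theorem stmt_10 (X : Type*) [NormedAddCommGroup X] [NormedSpace ℝ X] [CompleteSpace X]
    (T0 : ℝ → X →L[ℝ] X)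
    (hT0id : T0 0 = ContinuousLinearMap.id ℝ X)
    (hT0sg : ∀ t u : ℝ, 0 ≤ t → 0 ≤ u → T0 (t + u) = (T0 t).comp (T0 u))
    (hT0cont : ∀ x : X, ContinuousOn (fun t => T0 t x) (Ici 0))
    (hnil : ∀ t : ℝ, 1 ≤ t → T0 t = 0)
    (C : X →L[ℝ] X)
    (L : ℝ → X →L[ℝ] X)
    (hLcont : ∀ x : X, ContinuousOn (fun t => L t x) (Ici 0))
    (hL : ∀ t : ℝ, 0 ≤ t → ∀ x : X,
      L t x = C (T0 t x) + ∫ a in (0:ℝ)..t, L a (C (T0 (t - a) x)))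
    (T : ℝ → X →L[ℝ] X)
    (hT : ∀ t : ℝ, 0 ≤ t → ∀ x : X,
      T t x = T0 t x + ∫ s in (0:ℝ)..t, T0 (t - s) (L s x))
    (φ : ℝ → X) (hφ : IntegrableOn φ (Icc (-1:ℝ) 0))
    (f : ℝ → X)
    (hf : ∀ t : ℝ, 0 ≤ t → f t = ∫ a in t..(1:ℝ), C (T0 a (φ (t - a))))
    (hf1 : ∀ t : ℝ, 1 ≤ t → f t = 0)
    (b : ℝ → X)
    (hb : ∀ t : ℝ, 0 ≤ t → b t = f t + ∫ a in (0:ℝ)..t, L a (f (t - a)))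
    (Kφ : X) (hKφ : Kφ = ∫ a in (0:ℝ)..1, T0 a (φ (-a))) :
    (∀ t : ℝ, 0 ≤ t → f t = C (T0 t Kφ)) ∧
    (∀ t : ℝ, 0 < t → b t = L t Kφ ∧ b t = C (T t Kφ)) := by
  have hψ : IntervalIntegrable (fun a : ℝ => φ (-a)) volume 0 1 := by
    have h1 : IntervalIntegrable φ volume (-1) 0 := by
      apply MeasureTheory.IntegrableOn.intervalIntegrable
      rwa [uIcc_of_le (by norm_num : (-1:ℝ) ≤ 0)]
    have h2 := (IntervalIntegrable.iff_comp_neg (by finiteness)).mp h1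
    simpa using h2.symm
  have hA0cont : ∀ y : X, ContinuousOn (fun r => (C.comp (T0 r)) y) (Ici 0) := fun y =>
    C.continuous.comp_continuousOn (hT0cont y)
  have part1 : ∀ t : ℝ, 0 ≤ t → f t = C (T0 t Kφ) := by
    intro t ht0
    rcases le_or_gt 1 t with h1t | h1t
    · rw [hf1 t h1t, hnil t h1t]
      simp
    · have ht1 : t ≤ 1 := h1t.le
      have hu01 : uIcc (0:ℝ) 1 = Icc 0 1 := uIcc_of_le (by norm_num)
      have hg : IntervalIntegrable (fun a => C (T0 (t + a) (φ (-a)))) volume 0 1 := by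
        apply strong_comp_intervalIntegrable (fun u => C.comp (T0 u)) hA0cont 2 (by norm_num)
          (θ := fun a => t + a) (continuous_const.add continuous_id).measurable ?_ hψ
        intro a ha
        rw [hu01] at ha
        refine ⟨?_, ?_⟩
        · show (0:ℝ) ≤ t + a
          linarith [ha.1]
        · show t + a ≤ 2
          linarith [ha.2]
      have key1 : C (T0 t Kφ) = ∫ a in (0:ℝ)..1, C (T0 t (T0 a (φ (-a)))) := by
        rw [hKφ]
        have hcc : IntervalIntegrable (fun a : ℝ => T0 a (φ (-a))) volume 0 1 := by
          apply strong_comp_intervalIntegrable T0 hT0cont 1 (by norm_num) (θ := fun a => a)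
            measurable_id ?_ hψ
          intro a ha
          rwa [hu01] at ha
        exact ((C.comp (T0 t)).intervalIntegral_comp_comm hcc).symm
      have key2 : (∫ a in (0:ℝ)..1, C (T0 t (T0 a (φ (-a)))))
          = ∫ a in (0:ℝ)..1, C (T0 (t + a) (φ (-a))) := by
        apply integral_congr
        intro a ha
        rw [hu01] at ha
        show C (T0 t (T0 a (φ (-a)))) = C (T0 (t + a) (φ (-a)))
        rw [hT0sg t a ht0 ha.1]
        rfl
      have hmem1 : (0:ℝ) ∈ uIcc (0:ℝ) 1 := left_mem_uIcc
      have hmem2 : (1:ℝ) - t ∈ uIcc (0:ℝ) 1 := by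
        rw [hu01]
        exact ⟨by linarith, by linarith⟩
      have hmem3 : (1:ℝ) ∈ uIcc (0:ℝ) 1 := right_mem_uIcc
      have hsplit := integral_add_adjacent_intervals
        (hg.mono_set (uIcc_subset_uIcc hmem1 hmem2))
        (hg.mono_set (uIcc_subset_uIcc hmem2 hmem3))
      have hzero : (∫ a in (1-t)..(1:ℝ), C (T0 (t + a) (φ (-a)))) = 0 := by
        have hz : ∀ a ∈ uIcc ((1:ℝ)-t) 1, C (T0 (t + a) (φ (-a))) = (fun _ => (0:X)) a := by
          intro a ha
          rw [uIcc_of_le (by linarith : (1:ℝ) - t ≤ 1)] at ha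
          have h1a : (1:ℝ) ≤ t + a := by linarith [ha.1]
          rw [hnil _ h1a]
          simp
        rw [integral_congr hz, intervalIntegral.integral_zero]
      have e : ∀ x ∈ uIcc (0:ℝ) (1-t), C (T0 (t + x) (φ (-x)))
          = (fun a => C (T0 a (φ (t - a)))) (t + x) := by
        intro x _
        show C (T0 (t + x) (φ (-x))) = C (T0 (t + x) (φ (t - (t + x))))
        have : t - (t + x) = -x := by ring
        rw [this]
      have hft : (∫ a in (0:ℝ)..(1-t), C (T0 (t + a) (φ (-a))))
          = ∫ a in t..(1:ℝ), C (T0 a (φ (t - a))) := by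
        rw [integral_congr e, integral_comp_add_left (fun a => C (T0 a (φ (t - a)))) t]
        norm_num
      rw [hf t ht0, key1, key2, ← hsplit, hzero, add_zero, hft]
  refine ⟨part1, fun t ht => ?_⟩
  have ht0 := ht.le
  have hbL : b t = L t Kφ := by
    rw [hb t ht0]
    have hcong : ∀ a ∈ uIcc (0:ℝ) t, L a (f (t - a)) = L a (C (T0 (t - a) Kφ)) := by
      intro a ha
      rw [uIcc_of_le ht0] at ha
      rw [part1 (t - a) (by linarith [ha.2])]
    rw [integral_congr hcong, part1 t ht0, ← hL t ht0 Kφ]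
  refine ⟨hbL, ?_⟩
  rw [hbL]
  have intg : IntervalIntegrable (fun s => T0 (t - s) (L s Kφ)) volume 0 t := by
    apply ContinuousOn.intervalIntegrable
    rw [uIcc_of_le ht0]
    apply strong_comp_contOn T0 hT0cont t ht0 (θ := fun s => t - s)
      (continuous_const.sub continuous_id).continuousOn ?_ ?_
    · intro s hs
      refine ⟨?_, ?_⟩
      · show (0:ℝ) ≤ t - s
        linarith [hs.2]
      · show t - s ≤ t
        linarith [hs.1]
    · apply strong_comp_contOn L hLcont t ht0 (θ := fun s => s) continuousOn_id
        (fun s hs => hs) continuousOn_const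
  rw [hT t ht0 Kφ, map_add, ← C.intervalIntegral_comp_comm intg,
    conv_comm T0 hT0cont C L hLcont hL ht0 Kφ]
  exact hL t ht0 Kφ
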